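/- Let γ > 0, p > 5 and ω > γ²/4. Assume E(φ_ω) > 0 and S_ω(φ_ω) = d(ω). Then there is no map u : [0,∞) → H¹(ℝ) with u(0) ∈ 𝓑_ω such that: (i) E(u(t)) = E(u(0)) and ‖u(t)‖_{L²} = ‖u(0)‖_{L²} for all t ≥ 0; (ii) t ↦ K_ω(u(t)) and t ↦ P(u(t)) are continuous on [0,∞); and (iii) there exists a twice differentiable function f : [0,∞) → [0,∞) with f''(t) = 8 P(u(t)) for all t ≥ 0. (In particular, any solution of the nonlinear Schrödinger equation with attractive delta potential, which enjoys properties (i)–(iii) by conservation laws and the virial identity, cannot exist globally if its initial datum lies in 𝓑_ω.) -/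

import Mathlib

set_option maxHeartbeats 1000000


open MeasureTheory Set
open scoped ENNReal

noncomputable section

/-- Inverse hyperbolic tangent. -/
def artanh (x : ℝ) : ℝ := Real.log ((1 + x) / (1 - x)) / 2

/-- Squared `L²` norm of `v`. -/
def l2Sq (v : ℝ → ℂ) : ℝ := ∫ x : ℝ, ‖v x‖ ^ 2

/-- Squared `L²` norm of the derivative of `v`. -/
def gradSq (v : ℝ → ℂ) : ℝ := ∫ x : ℝ, ‖deriv v x‖ ^ 2

/-- `∫ |v|^(p+1)`, i.e. `‖v‖_{L^{p+1}}^{p+1}`. -/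
def lpPow (p : ℝ) (v : ℝ → ℂ) : ℝ := ∫ x : ℝ, ‖v x‖ ^ (p + 1)

/-- `v ∈ H¹(ℝ)`, expressed via its continuous representative: `v` is square
integrable, absolutely continuous with a.e. derivative `deriv v`, which is
square integrable. -/
def MemH1 (v : ℝ → ℂ) : Prop :=
  Continuous v ∧ MemLp v 2 volume ∧ MemLp (deriv v) 2 volume ∧
    ∀ x : ℝ, v x = v 0 + ∫ t in (0:ℝ)..x, deriv v t

/-- The energy functional `E`. -/
def En (γ p : ℝ) (v : ℝ → ℂ) : ℝ :=
  gradSq v / 2 - γ / 2 * ‖v 0‖ ^ 2 - lpPow p v / (p + 1)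

/-- The Nehari functional `K_ω`. -/
def Kfun (γ p ω : ℝ) (v : ℝ → ℂ) : ℝ :=
  gradSq v + ω * l2Sq v - γ * ‖v 0‖ ^ 2 - lpPow p v

/-- The virial functional `P`. -/
def Pfun (γ p : ℝ) (v : ℝ → ℂ) : ℝ :=
  gradSq v - γ / 2 * ‖v 0‖ ^ 2 - (p - 1) / (2 * (p + 1)) * lpPow p v

/-- The action functional `S_ω`. -/
def Sfun (γ p ω : ℝ) (v : ℝ → ℂ) : ℝ := En γ p v + ω / 2 * l2Sq v

/-- The minimal action `d(ω)` on the Nehari manifold. -/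
def dInf (γ p ω : ℝ) : ℝ :=
  sInf {s : ℝ | ∃ v : ℝ → ℂ, MemH1 v ∧ v ≠ 0 ∧ Kfun γ p ω v = 0 ∧ s = Sfun γ p ω v}

/-- The explicit standing wave profile `φ_ω`. -/
def phi (γ p ω : ℝ) (x : ℝ) : ℝ :=
  ((p + 1) * ω / 2 *
      (1 / Real.cosh ((p - 1) * Real.sqrt ω / 2 * |x| + artanh (γ / (2 * Real.sqrt ω)))) ^ 2)
    ^ (1 / (p - 1))

/-- `φ_ω` as a complex valued function. -/
def phiC (γ p ω : ℝ) : ℝ → ℂ := fun x => (phi γ p ω x : ℂ)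

/-- The `L²`-invariant scaling `v^λ(x) = λ^{1/2} v(λ x)`. -/
def scale (l : ℝ) (v : ℝ → ℂ) : ℝ → ℂ := fun x => (Real.sqrt l : ℂ) * v (l * x)

/-- The set `𝓑_ω`. -/
def inB (γ p ω : ℝ) (v : ℝ → ℂ) : Prop :=
  MemH1 v ∧ 0 < En γ p v ∧ En γ p v < En γ p (phiC γ p ω) ∧
    l2Sq v = l2Sq (phiC γ p ω) ∧ Pfun γ p v < 0 ∧ Kfun γ p ω v < 0


/-! ### Auxiliary lemmas -/

section Aux

lemma l2Sq_nonneg (v : ℝ → ℂ) : 0 ≤ l2Sq v :=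
  integral_nonneg fun x => by positivity

lemma lpPow_nonneg (p : ℝ) (v : ℝ → ℂ) : 0 ≤ lpPow p v :=
  integral_nonneg fun x => by positivity

lemma l2Sq_zero : l2Sq (0 : ℝ → ℂ) = 0 := by
  simp [l2Sq]

lemma En_zero (γ p : ℝ) : En γ p (0 : ℝ → ℂ) = 0 := by
  have hd : deriv (0 : ℝ → ℂ) = fun _ => 0 := by
    funext x
    have : (0 : ℝ → ℂ) = fun _ => (0:ℂ) := rfl
    rw [this, deriv_const]
  simp [En, gradSq, lpPow, hd]
  left; left
  simp [Measure.real]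

lemma eq_zero_of_l2Sq_eq_zero {v : ℝ → ℂ} (hv : MemH1 v) (h : l2Sq v = 0) : v = 0 := by
  have hmeas : AEStronglyMeasurable v volume := hv.1.aestronglyMeasurable
  have hint : Integrable (fun x => ‖v x‖ ^ 2) volume :=
    (memLp_two_iff_integrable_sq_norm hmeas).1 hv.2.1
  have h0 : (fun x => ‖v x‖ ^ 2) =ᶠ[ae volume] 0 :=
    (integral_eq_zero_iff_of_nonneg (fun x => by positivity) hint).1 h
  have h1 : v =ᶠ[ae volume] 0 := by
    filter_upwards [h0] with x hx
    have : ‖v x‖ ^ 2 = 0 := hx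
    have : ‖v x‖ = 0 := by nlinarith [norm_nonneg (v x)]
    simpa using this
  exact (Continuous.ae_eq_iff_eq volume hv.1 continuous_const).1 h1

lemma dInf_le {γ p ω : ℝ} (hp : 1 < p) {w : ℝ → ℂ} (hw : MemH1 w) (hw0 : w ≠ 0)
    (hK : Kfun γ p ω w = 0) : dInf γ p ω ≤ Sfun γ p ω w := by
  have hbdd : BddBelow {s : ℝ | ∃ v : ℝ → ℂ, MemH1 v ∧ v ≠ 0 ∧ Kfun γ p ω v = 0 ∧ s = Sfun γ p ω v} := by
    refine ⟨0, fun s hs => ?_⟩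
    obtain ⟨v, _, _, hKv, rfl⟩ := hs
    have hL := lpPow_nonneg p v
    have hKv' : gradSq v + ω * l2Sq v - γ * ‖v 0‖ ^ 2 = lpPow p v := by
      have := hKv; unfold Kfun at this; linarith
    have : Sfun γ p ω v = (1 / 2 - 1 / (p + 1)) * lpPow p v := by
      unfold Sfun En; rw [← hKv']; ring
    rw [this]
    have hp1 : (0:ℝ) < p + 1 := by linarith
    have : 1 / (p + 1) ≤ 1 / 2 := by
      rw [div_le_div_iff₀ hp1 (by norm_num)]; linarith
    nlinarith
  exact csInf_le hbdd ⟨w, hw, hw0, hK, rfl⟩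

/-! ### Scaling identities -/

lemma scale_zero_val (l : ℝ) (v : ℝ → ℂ) : scale l v 0 = (Real.sqrt l : ℂ) * v 0 := by
  simp [scale]

lemma norm_scale_zero_sq {l : ℝ} (v : ℝ → ℂ) (hl : 0 < l) : ‖scale l v 0‖ ^ 2 = l * ‖v 0‖ ^ 2 := by
  rw [scale_zero_val]
  rw [norm_mul, Complex.norm_real, Real.norm_eq_abs, abs_of_nonneg (Real.sqrt_nonneg l)]
  rw [mul_pow, Real.sq_sqrt hl.le]

lemma deriv_scale' {l : ℝ} (hl : 0 < l) (v : ℝ → ℂ) (x : ℝ) :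
    deriv (scale l v) x = ((l * Real.sqrt l : ℝ) : ℂ) * deriv v (l * x) := by
  by_cases hdiff : DifferentiableAt ℝ v (l * x)
  · have h1 : HasDerivAt (fun y : ℝ => l * y) l x := by
      simpa using (hasDerivAt_id x).const_mul l
    have h2 : HasDerivAt v (deriv v (l * x)) (l * x) := hdiff.hasDerivAt
    have h3 : HasDerivAt (fun y : ℝ => v (l * y)) (l • deriv v (l * x)) x :=
      HasDerivAt.scomp x h2 h1
    have h4 : HasDerivAt (scale l v) ((Real.sqrt l : ℂ) * (l • deriv v (l * x))) x := by
      exact h3.const_mul _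
    rw [h4.deriv]
    rw [Complex.real_smul]
    push_cast
    ring
  · have hnd : ¬ DifferentiableAt ℝ (scale l v) x := by
      intro hcon
      apply hdiff
      have hv : v = fun y => ((Real.sqrt l : ℂ))⁻¹ * scale l v (l⁻¹ * y) := by
        funext y
        simp only [scale]
        rw [mul_inv_cancel_left₀ hl.ne']
        rw [← mul_assoc, inv_mul_cancel₀ (by
          simp only [ne_eq, Complex.ofReal_eq_zero]
          exact (Real.sqrt_pos.2 hl).ne' : (Real.sqrt l : ℂ) ≠ 0), one_mul]
      rw [hv]
      have h1 : DifferentiableAt ℝ (fun y : ℝ => l⁻¹ * y) (l * x) := by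
        exact (differentiable_id.const_mul _).differentiableAt
      have h2 : DifferentiableAt ℝ (scale l v) (l⁻¹ * (l * x)) := by
        rwa [inv_mul_cancel_left₀ hl.ne']
      exact (h2.comp _ h1).const_mul _
    rw [deriv_zero_of_not_differentiableAt hnd,
      deriv_zero_of_not_differentiableAt hdiff, mul_zero]

lemma norm_scale_apply {l : ℝ} (hl : 0 < l) (v : ℝ → ℂ) (x : ℝ) :
    ‖scale l v x‖ = Real.sqrt l * ‖v (l * x)‖ := by
  simp only [scale]
  rw [norm_mul, Complex.norm_real, Real.norm_eq_abs, abs_of_nonneg (Real.sqrt_nonneg l)]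

lemma l2Sq_scale {l : ℝ} (hl : 0 < l) (v : ℝ → ℂ) : l2Sq (scale l v) = l2Sq v := by
  unfold l2Sq
  have h1 : ∀ x : ℝ, ‖scale l v x‖ ^ 2 = l * ‖v (l * x)‖ ^ 2 := by
    intro x
    rw [norm_scale_apply hl, mul_pow, Real.sq_sqrt hl.le]
  simp_rw [h1]
  rw [MeasureTheory.integral_const_mul]
  have h2 : (∫ x : ℝ, ‖v (l * x)‖ ^ 2) = |l⁻¹| • ∫ y : ℝ, ‖v y‖ ^ 2 :=
    Measure.integral_comp_mul_left (fun y => ‖v y‖ ^ 2) l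
  rw [h2, smul_eq_mul, abs_of_nonneg (by positivity : (0:ℝ) ≤ l⁻¹)]
  field_simp

lemma gradSq_scale {l : ℝ} (hl : 0 < l) (v : ℝ → ℂ) : gradSq (scale l v) = l ^ 2 * gradSq v := by
  unfold gradSq
  have h1 : ∀ x : ℝ, ‖deriv (scale l v) x‖ ^ 2 = l ^ 3 * ‖deriv v (l * x)‖ ^ 2 := by
    intro x
    rw [deriv_scale' hl, norm_mul, Complex.norm_real, Real.norm_eq_abs,
      abs_of_nonneg (by positivity : (0:ℝ) ≤ l * Real.sqrt l), mul_pow]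
    rw [mul_pow, Real.sq_sqrt hl.le]
    ring
  simp_rw [h1]
  rw [MeasureTheory.integral_const_mul]
  have h2 : (∫ x : ℝ, ‖deriv v (l * x)‖ ^ 2) = |l⁻¹| • ∫ y : ℝ, ‖deriv v y‖ ^ 2 :=
    Measure.integral_comp_mul_left (fun y => ‖deriv v y‖ ^ 2) l
  rw [h2, smul_eq_mul, abs_of_nonneg (by positivity : (0:ℝ) ≤ l⁻¹)]
  field_simp

lemma lpPow_scale {l : ℝ} (hl : 0 < l) {p : ℝ} (hp : 1 < p) (v : ℝ → ℂ) :
    lpPow p (scale l v) = l ^ ((p - 1) / 2) * lpPow p v := by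
  unfold lpPow
  have h1 : ∀ x : ℝ, ‖scale l v x‖ ^ (p + 1) = l ^ ((p + 1) / 2) * ‖v (l * x)‖ ^ (p + 1) := by
    intro x
    rw [norm_scale_apply hl, Real.mul_rpow (Real.sqrt_nonneg l) (norm_nonneg _)]
    congr 1
    rw [Real.sqrt_eq_rpow, ← Real.rpow_mul hl.le]
    congr 1
    ring
  simp_rw [h1]
  rw [MeasureTheory.integral_const_mul]
  have h2 : (∫ x : ℝ, ‖v (l * x)‖ ^ (p + 1)) = |l⁻¹| • ∫ y : ℝ, ‖v y‖ ^ (p + 1) :=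
    Measure.integral_comp_mul_left (fun y => ‖v y‖ ^ (p + 1)) l
  rw [h2, smul_eq_mul, abs_of_nonneg (by positivity : (0:ℝ) ≤ l⁻¹)]
  rw [← mul_assoc]
  congr 1
  rw [← Real.rpow_neg_one l, ← Real.rpow_add hl]
  congr 1
  ring

lemma memH1_scale {l : ℝ} (hl : 0 < l) {v : ℝ → ℂ} (hv : MemH1 v) : MemH1 (scale l v) := by
  obtain ⟨hc, hl2, hd2, hftc⟩ := hv
  have hcont : Continuous (scale l v) :=
    continuous_const.mul (hc.comp (continuous_const.mul continuous_id))
  refine ⟨hcont, ?_, ?_, ?_⟩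
  · rw [memLp_two_iff_integrable_sq_norm hcont.aestronglyMeasurable]
    have hint : Integrable (fun x => ‖v x‖ ^ 2) volume :=
      (memLp_two_iff_integrable_sq_norm hc.aestronglyMeasurable).1 hl2
    have hint2 : Integrable (fun x => ‖v (l * x)‖ ^ 2) volume :=
      (integrable_comp_mul_left_iff (fun y => ‖v y‖ ^ 2) hl.ne').2 hint
    have heq : (fun x => ‖scale l v x‖ ^ 2) = fun x => l * ‖v (l * x)‖ ^ 2 := by
      funext x
      simp only [scale]
      rw [norm_mul, Complex.norm_real, Real.norm_eq_abs,
        abs_of_nonneg (Real.sqrt_nonneg l), mul_pow, Real.sq_sqrt hl.le]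
    rw [heq]
    exact hint2.const_mul l
  · have hsm : AEStronglyMeasurable (deriv (scale l v)) volume :=
      (stronglyMeasurable_deriv (scale l v)).aestronglyMeasurable
    rw [memLp_two_iff_integrable_sq_norm hsm]
    have hsmv : AEStronglyMeasurable (deriv v) volume :=
      (stronglyMeasurable_deriv v).aestronglyMeasurable
    have hint : Integrable (fun x => ‖deriv v x‖ ^ 2) volume :=
      (memLp_two_iff_integrable_sq_norm hsmv).1 hd2
    have hint2 : Integrable (fun x => ‖deriv v (l * x)‖ ^ 2) volume :=
      (integrable_comp_mul_left_iff (fun y => ‖deriv v y‖ ^ 2) hl.ne').2 hint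
    have heq : (fun x => ‖deriv (scale l v) x‖ ^ 2) = fun x => l ^ 3 * ‖deriv v (l * x)‖ ^ 2 := by
      funext x
      rw [deriv_scale' hl, norm_mul, Complex.norm_real, Real.norm_eq_abs,
        abs_of_nonneg (by positivity : (0:ℝ) ≤ l * Real.sqrt l), mul_pow, mul_pow,
        Real.sq_sqrt hl.le]
      ring
    rw [heq]
    exact hint2.const_mul _
  · intro x
    have hder : (fun t => deriv (scale l v) t) = fun t => ((l * Real.sqrt l : ℝ) : ℂ) * deriv v (l * t) :=
      funext (deriv_scale' hl v)
    rw [hder]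
    rw [intervalIntegral.integral_const_mul]
    have hci : (∫ t in (0:ℝ)..x, deriv v (l * t)) = l⁻¹ • ∫ t in (l*0:ℝ)..(l*x), deriv v t :=
      intervalIntegral.integral_comp_mul_left (deriv v) hl.ne'
    rw [hci]
    have hv1 : (∫ t in (l*0:ℝ)..(l*x), deriv v t) = v (l*x) - v 0 := by
      rw [mul_zero]
      have := hftc (l*x)
      rw [this]
      ring
    rw [hv1, Complex.real_smul]
    simp only [scale, mul_zero]
    push_cast
    have hlne : (l:ℂ) ≠ 0 := by exact_mod_cast hl.ne'
    field_simp
    ring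

lemma Kfun_scale {γ p ω l : ℝ} (hl : 0 < l) (hp : 1 < p) (v : ℝ → ℂ) :
    Kfun γ p ω (scale l v) =
      l ^ 2 * gradSq v + ω * l2Sq v - γ * (l * ‖v 0‖ ^ 2) - l ^ ((p - 1) / 2) * lpPow p v := by
  unfold Kfun
  rw [gradSq_scale hl, l2Sq_scale hl, lpPow_scale hl hp, norm_scale_zero_sq v hl]

lemma Sfun_scale {γ p ω l : ℝ} (hl : 0 < l) (hp : 1 < p) (v : ℝ → ℂ) :
    Sfun γ p ω (scale l v) =
      l ^ 2 * gradSq v / 2 + ω / 2 * l2Sq v - γ / 2 * (l * ‖v 0‖ ^ 2)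
        - l ^ ((p - 1) / 2) * lpPow p v / (p + 1) := by
  unfold Sfun En
  rw [gradSq_scale hl, l2Sq_scale hl, lpPow_scale hl hp, norm_scale_zero_sq v hl]
  ring

/-! ### The key variational estimate -/

theorem P_bound {γ p ω : ℝ} (hp : 5 < p) (hω0 : 0 < ω) {v : ℝ → ℂ}
    (hv : MemH1 v) (hm : 0 < l2Sq v) (hE : 0 ≤ En γ p v) (hK : Kfun γ p ω v < 0)
    (hS : Sfun γ p ω v < dInf γ p ω) :
    Pfun γ p v ≤ 4 * (Sfun γ p ω v - dInf γ p ω) := by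
  have hp1 : (1:ℝ) < p := by linarith
  have hp1' : (0:ℝ) < p + 1 := by linarith
  set a := gradSq v with ha
  set c := ‖v 0‖ ^ 2 with hc
  set L := lpPow p v with hL
  set m := l2Sq v with hm'
  have hLpos : 0 ≤ L := lpPow_nonneg p v
  set k : ℝ → ℝ := fun t => t ^ 2 * a + ω * m - γ * (t * c) - t ^ ((p - 1) / 2) * L with hk
  have hkcont : Continuous k := by
    apply Continuous.sub
    · apply Continuous.sub
      · exact ((continuous_pow 2).mul continuous_const).add continuous_const
      · exact continuous_const.mul (continuous_id.mul continuous_const)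
    · apply Continuous.mul _ continuous_const
      rw [continuous_iff_continuousAt]
      intro x
      exact Real.continuousAt_rpow_const x _ (Or.inr (by linarith))
  have hk0 : k 0 = ω * m := by
    simp only [hk]
    rw [Real.zero_rpow (ne_of_gt (by linarith : (0:ℝ) < (p-1)/2))]
    ring
  have hk1 : k 1 = Kfun γ p ω v := by
    simp only [hk]
    rw [Real.one_rpow]
    simp only [Kfun, ← ha, ← hc, ← hL, ← hm']
    ring
  have hmem : (0:ℝ) ∈ Icc (k 1) (k 0) := by
    constructor
    · rw [hk1]; exact hK.le
    · rw [hk0]; positivity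
  obtain ⟨t, htIcc, htk⟩ := intermediate_value_Icc' (by norm_num : (0:ℝ) ≤ 1)
    hkcont.continuousOn hmem
  have ht0 : 0 < t := by
    rcases lt_or_eq_of_le htIcc.1 with h | h
    · exact h
    · exfalso; rw [← h] at htk; rw [hk0] at htk; nlinarith
  have ht1 : t < 1 := by
    rcases lt_or_eq_of_le htIcc.2 with h | h
    · exact h
    · exfalso; rw [h] at htk; rw [hk1] at htk; linarith
  have hKsc : Kfun γ p ω (scale t v) = 0 := by
    rw [Kfun_scale ht0 hp1]
    simpa only [← ha, ← hc, ← hL, ← hm'] using htk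
  have hscne : scale t v ≠ 0 := by
    intro h0
    have h2 : l2Sq v = 0 := by rw [← l2Sq_scale ht0 v, h0, l2Sq_zero]
    rw [← hm'] at h2
    exact absurd h2 (ne_of_gt hm)
  have hdle : dInf γ p ω ≤ Sfun γ p ω (scale t v) :=
    dInf_le hp1 (memH1_scale ht0 hv) hscne hKsc
  set s : ℝ := (p - 3) / 2 with hs
  have hs1 : (1:ℝ) ≤ s := by rw [hs]; linarith
  have hB : 1 + s * (t - 1) ≤ t ^ s := by
    have := one_add_mul_self_le_rpow_one_add (by linarith : (-1:ℝ) ≤ t - 1) hs1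
    simpa using this
  have hsplit : t ^ ((p - 1) / 2) = t * t ^ s := by
    have h1 : (p - 1) / 2 = 1 + s := by rw [hs]; ring
    rw [h1, Real.rpow_add ht0, Real.rpow_one]
  have hEn : 0 ≤ a / 2 - γ / 2 * c - L / (p + 1) := by
    simpa only [En, ← ha, ← hc, ← hL] using hE
  have hSv : Sfun γ p ω v = a / 2 - γ / 2 * c - L / (p + 1) + ω / 2 * m := by
    simp only [Sfun, En, ← ha, ← hc, ← hL, ← hm']
  have hPv : Pfun γ p v = a - γ / 2 * c - (p - 1) / (2 * (p + 1)) * L := by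
    simp only [Pfun, ← ha, ← hc, ← hL]
  have hkey : Sfun γ p ω (scale t v) ≤ Sfun γ p ω v - Pfun γ p v * (t * (1 - t)) := by
    rw [Sfun_scale ht0 hp1 v, hSv, hPv, hsplit]
    simp only [← ha, ← hc, ← hL, ← hm']
    have ht0' : (0:ℝ) ≤ t := ht0.le
    have hmul : t * (1 + s * (t - 1)) * L / (p + 1) ≤ t * t ^ s * L / (p + 1) := by
      have h6 : t * (1 + s * (t - 1)) * L ≤ t * t ^ s * L :=
        mul_le_mul_of_nonneg_right (mul_le_mul_of_nonneg_left hB ht0') hLpos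
      exact div_le_div_of_nonneg_right h6 hp1'.le
    have hiden : t ^ 2 * a / 2 + ω / 2 * m - γ / 2 * (t * c) - t * (1 + s * (t - 1)) * L / (p + 1)
        = (a / 2 - γ / 2 * c - L / (p + 1) + ω / 2 * m)
          - (a - γ / 2 * c - (p - 1) / (2 * (p + 1)) * L) * (t * (1 - t))
          - (a / 2 - γ / 2 * c - L / (p + 1)) * (1 - t) ^ 2 := by
      rw [hs]
      field_simp
      ring
    have hEterm : 0 ≤ (a / 2 - γ / 2 * c - L / (p + 1)) * (1 - t) ^ 2 :=
      mul_nonneg hEn (sq_nonneg _)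
    linarith
  have hmain : dInf γ p ω ≤ Sfun γ p ω v - Pfun γ p v * (t * (1 - t)) := le_trans hdle hkey
  set P := Pfun γ p v
  set D := Sfun γ p ω v - dInf γ p ω with hD
  have hDneg : D < 0 := by rw [hD]; linarith
  have hx0 : 0 < t * (1 - t) := by nlinarith
  have hx4 : t * (1 - t) ≤ 1 / 4 := by nlinarith [sq_nonneg (t - 1/2)]
  have hPx : P * (t * (1 - t)) ≤ D := by rw [hD]; linarith
  have hPneg : P < 0 := by nlinarith
  nlinarith [mul_nonneg (neg_nonneg.2 hPneg.le) (by linarith : (0:ℝ) ≤ 1/4 - t * (1-t))]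

/-! ### The convexity/blow-up argument -/

lemma blowup (f f' q : ℝ → ℝ) (ε : ℝ) (hε : 0 < ε)
    (h0 : ∀ t : ℝ, 0 ≤ t → 0 ≤ f t)
    (hf : ∀ t : ℝ, 0 ≤ t → HasDerivWithinAt f (f' t) (Ici 0) t)
    (hq : ∀ t : ℝ, 0 ≤ t → q t ≤ -ε)
    (hf' : ∀ t : ℝ, 0 ≤ t → HasDerivWithinAt f' (q t) (Ici 0) t) : False := by
  have hint : interior (Ici (0:ℝ)) = Ioi 0 := interior_Ici
  have hg : AntitoneOn (fun t => f' t + ε * t) (Ici 0) := by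
    apply antitoneOn_of_hasDerivWithinAt_nonpos (convex_Ici 0)
      (f' := fun t => q t + ε)
    · intro x hx
      exact ((hf' x hx).continuousWithinAt).add (continuous_const.mul continuous_id).continuousWithinAt
    · intro x hx
      rw [hint] at hx
      have h1 : HasDerivWithinAt f' (q x) (Ici 0) x := hf' x (le_of_lt hx)
      have h2 : HasDerivWithinAt (fun t : ℝ => ε * t) ε (Ici 0) x := by
        simpa using ((hasDerivWithinAt_id x (Ici 0)).const_mul ε)
      rw [hint]
      exact (h1.add h2).mono (by rw [← hint]; exact interior_subset)
    · intro x hx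
      rw [hint] at hx
      have := hq x (le_of_lt hx)
      linarith
  have hstep1 : ∀ t : ℝ, 0 ≤ t → f' t ≤ f' 0 - ε * t := by
    intro t ht
    have := hg (self_mem_Ici) ht ht
    simp only [mul_zero, add_zero] at this
    linarith
  have hh : AntitoneOn (fun t => f t - f' 0 * t + ε / 2 * t ^ 2) (Ici 0) := by
    apply antitoneOn_of_hasDerivWithinAt_nonpos (convex_Ici 0)
      (f' := fun t => f' t - f' 0 + ε * t)
    · intro x hx
      exact (((hf x hx).continuousWithinAt).sub
        (continuous_const.mul continuous_id).continuousWithinAt).add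
        ((continuous_const.mul (continuous_pow 2)).continuousWithinAt)
    · intro x hx
      rw [hint] at hx
      have h1 : HasDerivWithinAt f (f' x) (Ici 0) x := hf x (le_of_lt hx)
      have h2 : HasDerivWithinAt (fun t : ℝ => f' 0 * t) (f' 0) (Ici 0) x := by
        simpa using ((hasDerivWithinAt_id x (Ici 0)).const_mul (f' 0))
      have h3 : HasDerivWithinAt (fun t : ℝ => ε / 2 * t ^ 2) (ε / 2 * (2 * x)) (Ici 0) x := by
        have := (hasDerivWithinAt_pow 2 x (s := Ici (0:ℝ))).const_mul (ε / 2)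
        simpa using this
      have h4 := (h1.sub h2).add h3
      rw [hint]
      have heq : f' x - f' 0 + ε / 2 * (2 * x) = f' x - f' 0 + ε * x := by ring
      rw [← heq]
      exact h4.mono (by rw [← hint]; exact interior_subset)
    · intro x hx
      rw [hint] at hx
      have := hstep1 x (le_of_lt hx)
      linarith
  have hstep2 : ∀ t : ℝ, 0 ≤ t → f t ≤ f 0 + f' 0 * t - ε / 2 * t ^ 2 := by
    intro t ht
    have := hh (self_mem_Ici) ht ht
    simp only [mul_zero, sub_zero] at this
    norm_num at this
    linarith
  set T : ℝ := max 1 ((f 0 + |f' 0| + 1) * 2 / ε) with hT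
  have hT1 : (1:ℝ) ≤ T := le_max_left _ _
  have hT2 : (f 0 + |f' 0| + 1) * 2 / ε ≤ T := le_max_right _ _
  have hT0 : (0:ℝ) ≤ T := by linarith
  have hTε : (f 0 + |f' 0| + 1) * 2 ≤ ε * T := by
    rw [div_le_iff₀ hε] at hT2
    linarith
  have hfT := hstep2 T hT0
  have hfT0 := h0 T hT0
  have habs : f' 0 ≤ |f' 0| := le_abs_self _
  have hfa : 0 ≤ f 0 := h0 0 le_rfl
  have habs0 : 0 ≤ |f' 0| := abs_nonneg _
  nlinarith [mul_le_mul_of_nonneg_right hTε hT0]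

end Aux


/-- no global flow with conserved quantities and virial identity can
start in `𝓑_ω`. -/
theorem stmt12 (γ p ω : ℝ) (hγ : 0 < γ) (hp : 5 < p) (hω : γ ^ 2 / 4 < ω)
    (hEφ : 0 < En γ p (phiC γ p ω)) (hd : Sfun γ p ω (phiC γ p ω) = dInf γ p ω) :
    ¬ ∃ (u : ℝ → ℝ → ℂ) (f f' : ℝ → ℝ),
      (∀ t : ℝ, 0 ≤ t → MemH1 (u t)) ∧
      inB γ p ω (u 0) ∧
      (∀ t : ℝ, 0 ≤ t → En γ p (u t) = En γ p (u 0) ∧ l2Sq (u t) = l2Sq (u 0)) ∧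
      ContinuousOn (fun t => Kfun γ p ω (u t)) (Ici (0:ℝ)) ∧
      ContinuousOn (fun t => Pfun γ p (u t)) (Ici (0:ℝ)) ∧
      (∀ t : ℝ, 0 ≤ t → 0 ≤ f t) ∧
      (∀ t : ℝ, 0 ≤ t → HasDerivWithinAt f (f' t) (Ici (0:ℝ)) t ∧
        HasDerivWithinAt f' (8 * Pfun γ p (u t)) (Ici (0:ℝ)) t) := by
  rintro ⟨u, f, f', hH1, hB, hcons, hKcont, hPcont, hfpos, hder⟩
  obtain ⟨hu0H1, hE0pos, hEltφ, hmass, hP0, hK0⟩ := hB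
  have hω0 : 0 < ω := lt_of_le_of_lt (by positivity) hω
  have hp1 : (1:ℝ) < p := by linarith
  -- positive mass
  have hmpos : 0 < l2Sq (u 0) := by
    rcases lt_or_eq_of_le (l2Sq_nonneg (u 0)) with h | h
    · exact h
    · exfalso
      have h0 : u 0 = 0 := eq_zero_of_l2Sq_eq_zero hu0H1 h.symm
      rw [h0, En_zero] at hE0pos
      exact lt_irrefl 0 hE0pos
  -- sub-minimal action
  have hSlt : Sfun γ p ω (u 0) < dInf γ p ω := by
    rw [← hd]
    unfold Sfun
    rw [hmass]
    linarith
  -- conservation of the action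
  have hSt : ∀ t : ℝ, 0 ≤ t → Sfun γ p ω (u t) = Sfun γ p ω (u 0) := by
    intro t ht
    unfold Sfun
    rw [(hcons t ht).1, (hcons t ht).2]
  -- invariance of K < 0
  have hKt : ∀ t : ℝ, 0 ≤ t → Kfun γ p ω (u t) < 0 := by
    intro t ht
    by_contra hge
    push_neg at hge
    have hKcont' : ContinuousOn (fun s => Kfun γ p ω (u s)) (Icc 0 t) :=
      hKcont.mono (Icc_subset_Ici_self)
    have hmem : (0:ℝ) ∈ Icc (Kfun γ p ω (u 0)) (Kfun γ p ω (u t)) := ⟨hK0.le, hge⟩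
    obtain ⟨τ, hτIcc, hτ⟩ := intermediate_value_Icc ht hKcont' hmem
    have hτ0 : 0 ≤ τ := hτIcc.1
    have hune : u τ ≠ 0 := by
      intro h0
      have h2 : l2Sq (u τ) = 0 := by rw [h0, l2Sq_zero]
      rw [(hcons τ hτ0).2] at h2
      exact absurd h2 (ne_of_gt hmpos)
    have hdle := dInf_le hp1 (hH1 τ hτ0) hune hτ
    rw [hSt τ hτ0] at hdle
    linarith
  -- uniform virial bound
  have hPt : ∀ t : ℝ, 0 ≤ t →
      Pfun γ p (u t) ≤ 4 * (Sfun γ p ω (u 0) - dInf γ p ω) := by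
    intro t ht
    have hmt : 0 < l2Sq (u t) := by rw [(hcons t ht).2]; exact hmpos
    have hEt : 0 ≤ En γ p (u t) := by rw [(hcons t ht).1]; exact hE0pos.le
    have hSlt' : Sfun γ p ω (u t) < dInf γ p ω := by rw [hSt t ht]; exact hSlt
    have := P_bound hp hω0 (hH1 t ht) hmt hEt (hKt t ht) hSlt'
    rw [hSt t ht] at this
    exact this
  -- blow-up in finite time
  have hεpos : 0 < 32 * (dInf γ p ω - Sfun γ p ω (u 0)) := by linarith
  exact blowup f f' (fun t => 8 * Pfun γ p (u t))
    (32 * (dInf γ p ω - Sfun γ p ω (u 0))) hεpos hfpos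
    (fun t ht => (hder t ht).1)
    (fun t ht => by
      have := hPt t ht
      show 8 * Pfun γ p (u t) ≤ -(32 * (dInf γ p ω - Sfun γ p ω (u 0)))
      linarith)
    (fun t ht => (hder t ht).2)
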